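/- Orthogonality of distinguishable measurement records (Zurek): let U be a unitary on H_S ⊗ H_E, let x₁, x₂ be unit vectors in H_S and E₀, E₁, E₂ unit vectors in H_E such that U(x₁ ⊗ E₀) = x₁ ⊗ E₁ and U(x₂ ⊗ E₀) = x₂ ⊗ E₂. Then ⟨x₁, x₂⟩ · (1 − ⟨E₁, E₂⟩) = 0. In particular, if ⟨E₁, E₂⟩ ≠ 1, then x₁ and x₂ are orthogonal. -/

import Mathlib

theorem stmt_14
    {H_S H_E H : Type*}
    [NormedAddCommGroup H_S] [InnerProductSpace ℂ H_S]
    [NormedAddCommGroup H_E] [InnerProductSpace ℂ H_E]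
    [NormedAddCommGroup H] [InnerProductSpace ℂ H]
    -- `t x e` plays the role of the simple tensor `x ⊗ e`
    (t : H_S → H_E → H)
    (ht : ∀ (x y : H_S) (e f : H_E),
      (inner ℂ (t x e) (t y f) : ℂ) = inner ℂ x y * inner ℂ e f)
    (U : H →ₗᵢ[ℂ] H)
    (x₁ x₂ : H_S) (E₀ E₁ E₂ : H_E)
    (hx₁ : ‖x₁‖ = 1) (hx₂ : ‖x₂‖ = 1)
    (hE₀ : ‖E₀‖ = 1) (hE₁ : ‖E₁‖ = 1) (hE₂ : ‖E₂‖ = 1)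
    (hU₁ : U (t x₁ E₀) = t x₁ E₁) (hU₂ : U (t x₂ E₀) = t x₂ E₂) :
    (inner ℂ x₁ x₂ : ℂ) * (1 - (inner ℂ E₁ E₂ : ℂ)) = 0 ∧
    ((inner ℂ E₁ E₂ : ℂ) ≠ 1 → (inner ℂ x₁ x₂ : ℂ) = 0) := by
  have key : (inner ℂ (U (t x₁ E₀)) (U (t x₂ E₀)) : ℂ) = inner ℂ (t x₁ E₀) (t x₂ E₀) :=
    U.inner_map_map _ _
  rw [hU₁, hU₂, ht, ht] at key
  have hE0 : (inner ℂ E₀ E₀ : ℂ) = 1 := by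
    rw [inner_self_eq_norm_sq_to_K, hE₀]; norm_num
  rw [hE0, mul_one] at key
  have h1 : (inner ℂ x₁ x₂ : ℂ) * (1 - (inner ℂ E₁ E₂ : ℂ)) = 0 := by
    rw [mul_sub, mul_one, key, sub_self]
  exact ⟨h1, fun h => by
    rcases mul_eq_zero.mp h1 with h' | h'
    · exact h'
    · exact absurd (by linear_combination -h') h⟩
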